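/- Let φ be continuous on ℝ, zero on (-∞,-L], C² on (-L,0) with φ' > 0 on (-L,0), φ'_+(-L) ≠ 0, and suppose φ' extends continuously to [-L, 0) from the right. With T_m(δ), T_M(δ), φ'_{m,δ}, φ'_{M,δ}, φ''_{M,δ} as in the paper, define ε̄_m(δ) = 2 + T_m/T_M - (2φ(-L+2T_M)/(φ'_{m,δ})²)·φ''_{M,δ}·(2T_M/T_m) - (φ'_{M,δ})²/(φ'_{m,δ})². Then lim_{δ→0⁺} ε̄_m(δ) = 1 + (b-g_∞)/(b+g_∞) > 0; in particular there exists δ₀ > 0 with ε̄_m(δ₀) > 0. -/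

import Mathlib

open Set Filter Topology

/-- The recovery-condition quantity `ε̄_m(δ)` of the paper. -/
noncomputable def epsBarM (L b gInf : ℝ) (φ φ' φ'' : ℝ → ℝ) (δ : ℝ) : ℝ :=
  let Tm := 2 * δ / (b + gInf)
  let TM := 2 * δ / (b - gInf)
  let S := Icc (-L + Tm / 2) (-L + 4 * TM)
  2 + Tm / TM
    - (2 * φ (-L + 2 * TM) / (sInf (φ' '' S)) ^ 2) *
        (sSup ((fun t => |φ'' t|) '' S)) * (2 * TM / Tm)
    - (sSup (φ' '' S)) ^ 2 / (sInf (φ' '' S)) ^ 2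

/-- The sampling interval used in Corollary 1. -/
noncomputable def Sdelta (L b gInf δ : ℝ) : Set ℝ :=
  Icc (-L + (2 * δ / (b + gInf)) / 2) (-L + 4 * (2 * δ / (b - gInf)))

theorem recovery_condition_achievable
    (L b gInf c : ℝ) (hL : 0 < L) (hgInf : 0 < gInf) (hgb : gInf < b) (hc : c ≠ 0)
    (φ φ' φ'' : ℝ → ℝ)
    (hcont : Continuous φ)
    (hzero : ∀ t ≤ -L, φ t = 0)
    (hderiv : ∀ t ∈ Ioo (-L) 0, HasDerivAt φ (φ' t) t)
    (hderiv2 : ∀ t ∈ Ioo (-L) 0, HasDerivAt φ' (φ'' t) t)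
    (hpos : ∀ t ∈ Ioo (-L) 0, 0 < φ' t)
    (hright : Tendsto φ' (nhdsWithin (-L) (Ioi (-L))) (nhds c))
    (hbdd2 : ∃ C : ℝ, ∀ t ∈ Ioc (-L) (-L + L / 2), |φ'' t| ≤ C) :
    Tendsto (epsBarM L b gInf φ φ' φ'') (nhdsWithin 0 (Ioi 0))
        (nhds (1 + (b - gInf) / (b + gInf))) ∧
    0 < 1 + (b - gInf) / (b + gInf) ∧
    ∃ δ₀ > 0, 0 < epsBarM L b gInf φ φ' φ'' δ₀ := by
  have hb : 0 < b := hgInf.trans hgb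
  have hbg : 0 < b - gInf := sub_pos.2 hgb
  have hbg' : 0 < b + gInf := by positivity
  set l := nhdsWithin (0:ℝ) (Ioi 0) with hl
  -- c is positive
  have hc0 : 0 < c := by
    have hmem : Ioo (-L) 0 ∈ nhdsWithin (-L) (Ioi (-L)) := by
      rw [← Ioi_inter_Iio]
      exact inter_mem_nhdsWithin _ (Iio_mem_nhds (by linarith))
    have hge : 0 ≤ c :=
      ge_of_tendsto hright (eventually_of_mem hmem fun t ht => (hpos t ht).le)
    exact hge.lt_of_ne (Ne.symm hc)
  -- eventual containment of S δ in small right-neighborhoods of -L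
  have hsub : ∀ η > (0:ℝ), ∀ᶠ δ in l, Sdelta L b gInf δ ⊆ Ioc (-L) (-L + η) := by
    intro η hη
    have hmem : Ioo (0:ℝ) (η * (b - gInf) / 8) ∈ l := by
      apply Ioo_mem_nhdsGT_of_mem
      constructor
      · exact le_refl _
      · positivity
    filter_upwards [hmem] with δ hδ
    obtain ⟨hδ0, hδ1⟩ := hδ
    intro t ht
    obtain ⟨ht1, ht2⟩ := ht
    have hTmpos : 0 < 2 * δ / (b + gInf) := by positivity
    have h8 : 8 * δ < η * (b - gInf) := by linarith
    have hTMle : 4 * (2 * δ / (b - gInf)) ≤ η := by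
      rw [mul_div_assoc', div_le_iff₀ hbg]
      nlinarith
    constructor
    · linarith
    · linarith
  -- S δ is eventually nonempty
  have hne : ∀ᶠ δ in l, (Sdelta L b gInf δ).Nonempty := by
    filter_upwards [self_mem_nhdsWithin] with δ hδ
    have hδ0 : (0:ℝ) < δ := hδ
    refine nonempty_Icc.2 ?_
    have h1 : 2 * δ / (b + gInf) ≤ 2 * δ / (b - gInf) :=
      div_le_div_of_nonneg_left (by positivity) hbg (by linarith)
    have h2 : 0 < 2 * δ / (b - gInf) := by positivity
    have h3 : 0 < 2 * δ / (b + gInf) := by positivity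
    linarith
  -- all values of φ' on S δ are eventually ε-close to c
  have hkey : ∀ ε > (0:ℝ), ∀ᶠ δ in l,
      (∀ y ∈ φ' '' Sdelta L b gInf δ, y ∈ Icc (c - ε) (c + ε)) ∧
      (Sdelta L b gInf δ).Nonempty := by
    intro ε hε
    obtain ⟨η, hη, hmap⟩ := Metric.tendsto_nhdsWithin_nhds.mp hright ε hε
    filter_upwards [hsub (η / 2) (half_pos hη), hne] with δ h1 h2
    refine ⟨?_, h2⟩
    rintro y ⟨t, ht, rfl⟩
    have ht' := h1 ht
    have hd : dist (φ' t) c < ε := by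
      apply hmap ht'.1
      rw [Real.dist_eq]
      have h3 : -L < t := ht'.1
      have h4 : t ≤ -L + η / 2 := ht'.2
      rw [abs_of_pos (by linarith)]
      linarith
    rw [Real.dist_eq, abs_lt] at hd
    constructor <;> [linarith [hd.1]; linarith [hd.2]]
  -- sInf of φ' on S δ tends to c
  have hinf : Tendsto (fun δ => sInf (φ' '' Sdelta L b gInf δ)) l (𝓝 c) := by
    rw [Metric.tendsto_nhds]
    intro ε hε
    filter_upwards [hkey (ε / 2) (half_pos hε)] with δ hδ
    obtain ⟨hy, t0, ht0⟩ := hδ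
    have hmem0 : φ' t0 ∈ φ' '' Sdelta L b gInf δ := mem_image_of_mem _ ht0
    have hbdd : BddBelow (φ' '' Sdelta L b gInf δ) :=
      ⟨c - ε / 2, fun y hy' => (hy y hy').1⟩
    have h1 : c - ε / 2 ≤ sInf (φ' '' Sdelta L b gInf δ) :=
      le_csInf ⟨_, hmem0⟩ fun y hy' => (hy y hy').1
    have h2 : sInf (φ' '' Sdelta L b gInf δ) ≤ c + ε / 2 :=
      (csInf_le hbdd hmem0).trans (hy _ hmem0).2
    rw [Real.dist_eq, abs_lt]
    constructor <;> linarith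
  -- sSup of φ' on S δ tends to c
  have hsup : Tendsto (fun δ => sSup (φ' '' Sdelta L b gInf δ)) l (𝓝 c) := by
    rw [Metric.tendsto_nhds]
    intro ε hε
    filter_upwards [hkey (ε / 2) (half_pos hε)] with δ hδ
    obtain ⟨hy, t0, ht0⟩ := hδ
    have hmem0 : φ' t0 ∈ φ' '' Sdelta L b gInf δ := mem_image_of_mem _ ht0
    have hbdd : BddAbove (φ' '' Sdelta L b gInf δ) :=
      ⟨c + ε / 2, fun y hy' => (hy y hy').2⟩
    have h1 : sSup (φ' '' Sdelta L b gInf δ) ≤ c + ε / 2 :=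
      csSup_le ⟨_, hmem0⟩ fun y hy' => (hy y hy').2
    have h2 : c - ε / 2 ≤ sSup (φ' '' Sdelta L b gInf δ) :=
      (hy _ hmem0).1.trans (le_csSup hbdd hmem0)
    rw [Real.dist_eq, abs_lt]
    constructor <;> linarith
  -- the sSup of |φ''| is eventually bounded
  obtain ⟨C, hC⟩ := hbdd2
  have hCnn : 0 ≤ C :=
    le_trans (abs_nonneg _) (hC (-L + L / 2) ⟨by linarith, le_refl _⟩)
  have habs : ∀ᶠ δ in l, sSup ((fun t => |φ'' t|) '' Sdelta L b gInf δ) ∈ Icc 0 C := by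
    filter_upwards [hsub (L / 2) (by linarith), hne] with δ h1 h2
    have hbddA : BddAbove ((fun t => |φ'' t|) '' Sdelta L b gInf δ) := by
      refine ⟨C, ?_⟩
      rintro y ⟨t, ht, rfl⟩
      exact hC t (h1 ht)
    obtain ⟨t0, ht0⟩ := h2
    constructor
    · exact le_csSup_of_le hbddA (mem_image_of_mem _ ht0) (abs_nonneg _)
    · refine csSup_le ⟨_, mem_image_of_mem _ ht0⟩ ?_
      rintro y ⟨t, ht, rfl⟩
      exact hC t (h1 ht)
  -- φ(-L + 2 T_M) → 0
  have htm : Tendsto (fun δ => -L + 2 * (2 * δ / (b - gInf))) l (𝓝 (-L)) := by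
    have hcont' : Continuous fun δ : ℝ => -L + 2 * (2 * δ / (b - gInf)) := by
      continuity
    have := hcont'.tendsto 0
    simp only [mul_zero, zero_div, add_zero] at this
    exact this.mono_left nhdsWithin_le_nhds
  have hphi : Tendsto (fun δ => φ (-L + 2 * (2 * δ / (b - gInf)))) l (𝓝 0) := by
    have := (hcont.tendsto (-L)).comp htm
    rwa [hzero (-L) le_rfl] at this
  -- the middle term tends to 0
  have hc2 : (c : ℝ) ^ 2 ≠ 0 := pow_ne_zero _ hc0.ne'
  have hinf2 : Tendsto (fun δ => (sInf (φ' '' Sdelta L b gInf δ)) ^ 2) l (𝓝 (c ^ 2)) :=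
    hinf.pow 2
  have hA : Tendsto
      (fun δ => 2 * φ (-L + 2 * (2 * δ / (b - gInf))) /
        (sInf (φ' '' Sdelta L b gInf δ)) ^ 2) l (𝓝 0) := by
    have h := (Tendsto.const_mul (2:ℝ) hphi).div hinf2 hc2
    rw [mul_zero, zero_div] at h
    exact h
  have hAB : Tendsto
      (fun δ => (2 * φ (-L + 2 * (2 * δ / (b - gInf))) /
          (sInf (φ' '' Sdelta L b gInf δ)) ^ 2) *
        sSup ((fun t => |φ'' t|) '' Sdelta L b gInf δ)) l (𝓝 0) := by
    apply hA.zero_mul_isBoundedUnder_le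
    refine isBoundedUnder_of_eventually_le (a := C) ?_
    filter_upwards [habs] with δ hδ
    simp only [Function.comp_apply, Real.norm_eq_abs, abs_of_nonneg hδ.1]
    exact hδ.2
  have hG : Tendsto
      (fun δ => (2 * φ (-L + 2 * (2 * δ / (b - gInf))) /
          (sInf (φ' '' Sdelta L b gInf δ)) ^ 2) *
        sSup ((fun t => |φ'' t|) '' Sdelta L b gInf δ) *
        (2 * (b + gInf) / (b - gInf))) l (𝓝 0) := by
    have := hAB.mul_const (2 * (b + gInf) / (b - gInf))
    simpa using this
  -- the ratio term tends to 1
  have hQ : Tendsto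
      (fun δ => (sSup (φ' '' Sdelta L b gInf δ)) ^ 2 /
        (sInf (φ' '' Sdelta L b gInf δ)) ^ 2) l (𝓝 1) := by
    have := (hsup.pow 2).div hinf2 hc2
    rwa [div_self hc2] at this
  -- combine
  have hmain : Tendsto
      (fun δ => 2 + (b - gInf) / (b + gInf)
        - (2 * φ (-L + 2 * (2 * δ / (b - gInf))) /
            (sInf (φ' '' Sdelta L b gInf δ)) ^ 2) *
          sSup ((fun t => |φ'' t|) '' Sdelta L b gInf δ) *
          (2 * (b + gInf) / (b - gInf))
        - (sSup (φ' '' Sdelta L b gInf δ)) ^ 2 /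
            (sInf (φ' '' Sdelta L b gInf δ)) ^ 2) l
      (𝓝 (1 + (b - gInf) / (b + gInf))) := by
    have h := (tendsto_const_nhds (x := 2 + (b - gInf) / (b + gInf)) (f := l)).sub hG
      |>.sub hQ
    have : 2 + (b - gInf) / (b + gInf) - 0 - 1 = 1 + (b - gInf) / (b + gInf) := by ring
    rwa [this] at h
  have heq : epsBarM L b gInf φ φ' φ'' =ᶠ[l]
      (fun δ => 2 + (b - gInf) / (b + gInf)
        - (2 * φ (-L + 2 * (2 * δ / (b - gInf))) /
            (sInf (φ' '' Sdelta L b gInf δ)) ^ 2) *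
          sSup ((fun t => |φ'' t|) '' Sdelta L b gInf δ) *
          (2 * (b + gInf) / (b - gInf))
        - (sSup (φ' '' Sdelta L b gInf δ)) ^ 2 /
            (sInf (φ' '' Sdelta L b gInf δ)) ^ 2) := by
    filter_upwards [self_mem_nhdsWithin] with δ hδ
    have hδ0 : (0:ℝ) < δ := hδ
    show (2 + (2 * δ / (b + gInf)) / (2 * δ / (b - gInf))
      - (2 * φ (-L + 2 * (2 * δ / (b - gInf))) /
          (sInf (φ' '' Sdelta L b gInf δ)) ^ 2) *
        sSup ((fun t => |φ'' t|) '' Sdelta L b gInf δ) *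
        (2 * (2 * δ / (b - gInf)) / (2 * δ / (b + gInf)))) -
      (sSup (φ' '' Sdelta L b gInf δ)) ^ 2 /
          (sInf (φ' '' Sdelta L b gInf δ)) ^ 2 = _
    have e1 : (2 * δ / (b + gInf)) / (2 * δ / (b - gInf)) = (b - gInf) / (b + gInf) := by
      rw [div_div_div_eq]
      rw [mul_comm (2 * δ) (b - gInf), mul_div_mul_right _ _ (by positivity : (2:ℝ) * δ ≠ 0)]
    have e2 : 2 * (2 * δ / (b - gInf)) / (2 * δ / (b + gInf)) = 2 * (b + gInf) / (b - gInf) := by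
      field_simp
    rw [e1, e2]
  have htend : Tendsto (epsBarM L b gInf φ φ' φ'') l (𝓝 (1 + (b - gInf) / (b + gInf))) :=
    hmain.congr' heq.symm
  have hposlim : 0 < 1 + (b - gInf) / (b + gInf) := by positivity
  refine ⟨htend, hposlim, ?_⟩
  have hev : ∀ᶠ δ in l, 0 < epsBarM L b gInf φ φ' φ'' δ :=
    htend.eventually (eventually_gt_nhds hposlim)
  obtain ⟨δ₀, h1, h2⟩ := (hev.and self_mem_nhdsWithin).exists
  exact ⟨δ₀, h2, h1⟩
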